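/- Let ξ ∈ 𝓕̄, let y > 0, and let ε be a real number with 0 < ε ≤ (Im(ξ)/(100|ξ|³))². Then for each sign ν ∈ {±1}, the number of integer pairs (a,c) ∈ ℤ² satisfying |a² + 2ν|Re(ξ)|ac + |ξ|²c² − Im(ξ)/y| ≤ 50|ξ|³·ε^{1/2}/y is at most 16π·(√(2·Im(ξ)) + √y)/√y + 100π·|ξ|³·ε^{1/2}/(y·Im(ξ)). -/

import Mathlib

open Real

/-- The closed standard fundamental domain
`{τ ∈ ℍ : |Re τ| ≤ 1/2, |τ| ≥ 1}` viewed inside `ℂ`. -/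
def inFD (z : ℂ) : Prop :=
  0 < z.im ∧ |z.re| ≤ 1 / 2 ∧ 1 ≤ ‖z‖

lemma card_int_Icc_le (α β : ℝ) (h : α ≤ β) :
    ((Finset.Icc ⌈α⌉ ⌊β⌋).card : ℝ) ≤ β - α + 1 := by
  rw [Int.card_Icc]
  rcases le_or_gt (⌈α⌉ : ℤ) ⌊β⌋ with hle | hlt
  · have h0 : (0:ℤ) ≤ ⌊β⌋ + 1 - ⌈α⌉ := by omega
    have e : (((⌊β⌋ + 1 - ⌈α⌉).toNat : ℕ) : ℝ) = ((⌊β⌋:ℝ) + 1 - (⌈α⌉:ℝ)) := by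
      rw [← Int.cast_natCast, Int.toNat_of_nonneg h0]
      push_cast
      ring
    rw [e]
    have h1 : (⌊β⌋ : ℝ) ≤ β := Int.floor_le β
    have h2 : α ≤ (⌈α⌉ : ℝ) := Int.le_ceil α
    linarith
  · rw [Int.toNat_of_nonpos (by omega)]
    push_cast
    linarith

lemma integral_sqrt_parab (v a M : ℝ) (hv : 0 < v) (ha : 0 ≤ a) (hM : a / v ≤ M) :
    ∫ t in (0:ℝ)..M, Real.sqrt (a^2 - v^2*t^2) = π * a^2 / (4*v) := by
  have hf : Continuous (fun s : ℝ => Real.sqrt (1 - s^2)) :=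
    Real.continuous_sqrt.comp (by continuity)
  have hzero : ∀ b c : ℝ, 1 ≤ b → b ≤ c → (∫ s in b..c, Real.sqrt (1 - s^2)) = 0 := by
    intro b c hb hbc
    rw [intervalIntegral.integral_congr (g := fun _ => (0:ℝ)) ?_, intervalIntegral.integral_const, smul_zero]
    intro s hs
    rw [Set.uIcc_of_le hbc] at hs
    exact Real.sqrt_eq_zero_of_nonpos (by nlinarith [hs.1, hs.2])
  have hone : (∫ s in (0:ℝ)..1, Real.sqrt (1 - s^2)) = π / 4 := by
    have hneg : (∫ s in (-1:ℝ)..0, Real.sqrt (1 - s^2)) = ∫ s in (0:ℝ)..1, Real.sqrt (1 - s^2) := by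
      calc ∫ s in (-1:ℝ)..0, Real.sqrt (1-s^2)
          = ∫ s in -(1:ℝ)..(-0:ℝ), Real.sqrt (1-s^2) := by norm_num
        _ = ∫ s in (0:ℝ)..1, Real.sqrt (1-(-s)^2) :=
            (intervalIntegral.integral_comp_neg (fun s => Real.sqrt (1-s^2))).symm
        _ = ∫ s in (0:ℝ)..1, Real.sqrt (1-s^2) := by simp
    have hsplit : (∫ s in (-1:ℝ)..0, Real.sqrt (1 - s^2)) + (∫ s in (0:ℝ)..1, Real.sqrt (1 - s^2)) = π/2 := by
      rw [intervalIntegral.integral_add_adjacent_intervals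
        (hf.intervalIntegrable _ _) (hf.intervalIntegrable _ _)]
      simpa using integral_sqrt_one_sub_sq
    linarith [hneg, hsplit]
  have hup : ∀ b : ℝ, 1 ≤ b → (∫ s in (0:ℝ)..b, Real.sqrt (1 - s^2)) = π / 4 := by
    intro b hb
    rw [← intervalIntegral.integral_add_adjacent_intervals (a := (0:ℝ)) (b := 1) (c := b)
      (hf.intervalIntegrable _ _) (hf.intervalIntegrable _ _), hone, hzero 1 b le_rfl hb, add_zero]
  rcases eq_or_lt_of_le ha with rfl | hapos
  · simp only [ne_eq, OfNat.ofNat_ne_zero, not_false_eq_true, zero_pow, zero_sub]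
    rw [intervalIntegral.integral_congr (g := fun _ => (0:ℝ)) ?_]
    · simp
    intro s _
    exact Real.sqrt_eq_zero_of_nonpos (by nlinarith [sq_nonneg (v*s)])
  · have hc : v / a ≠ 0 := by positivity
    have key : ∀ t : ℝ, Real.sqrt (a^2 - v^2*t^2) = a * Real.sqrt (1 - (v/a*t)^2) := by
      intro t
      rw [← Real.sqrt_sq hapos.le, ← Real.sqrt_mul (by positivity)]
      congr 1
      field_simp
      linear_combination (Real.sqrt (a^2)^2 - v^2*t^2) * Real.sq_sqrt (sq_nonneg a)
    simp_rw [key]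
    rw [intervalIntegral.integral_const_mul,
      intervalIntegral.integral_comp_mul_left (fun s => Real.sqrt (1 - s^2)) hc]
    rw [mul_zero, smul_eq_mul]
    have h1 : (1:ℝ) ≤ v/a*M := by
      have e : (1:ℝ) = v/a*(a/v) := by field_simp
      rw [e]
      exact mul_le_mul_of_nonneg_left hM (by positivity)
    rw [hup (v/a*M) h1]
    field_simp

set_option maxHeartbeats 1000000 in
lemma annulus_count (x v T δ : ℝ) (hv : 0 < v) (hv2 : 3/4 ≤ v^2)
    (hT : 0 < T) (hδ : 0 < δ) (hδT : δ ≤ T/2) (S : Set (ℤ×ℤ))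
    (hmem : ∀ p ∈ S, |((p.1:ℝ) + x*(p.2:ℝ))^2 + v^2*(p.2:ℝ)^2 - T| ≤ δ) :
    S.Finite ∧ (S.ncard : ℝ) ≤ 2*π*δ/v + 10*Real.sqrt (2*T) + 2 := by
  set h1 : ℝ → ℝ := fun t => Real.sqrt (T + δ - v^2*t^2) with h1_def
  set h2 : ℝ → ℝ := fun t => Real.sqrt (T - δ - v^2*t^2) with h2_def
  set R : ℝ := Real.sqrt (T + δ) with hR_def
  have hR2 : R^2 = T + δ := Real.sq_sqrt (by linarith)
  have hR0 : 0 < R := Real.sqrt_pos.mpr (by linarith)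
  set r : ℝ := Real.sqrt (T - δ) with hr_def
  have hr2 : r^2 = T - δ := Real.sq_sqrt (by linarith)
  have hr0 : 0 < r := Real.sqrt_pos.mpr (by linarith)
  have hrR : r ≤ R := Real.sqrt_le_sqrt (by linarith)
  set C : ℤ := ⌊R / v⌋ with hC_def
  have hC0 : 0 ≤ C := Int.floor_nonneg.mpr (by positivity)
  set n : ℕ := C.toNat with hn_def
  have hnC : (n : ℤ) = C := Int.toNat_of_nonneg hC0
  have hnR : (n : ℝ) ≤ R / v := by
    rw [show ((n:ℝ)) = ((n:ℤ):ℝ) by push_cast; ring, hnC]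
    exact Int.floor_le _
  have hRn : R / v ≤ (n : ℝ) + 1 := by
    have := Int.lt_floor_add_one (R / v)
    rw [show ((n:ℝ)) = ((n:ℤ):ℝ) by push_cast; ring, hnC]
    linarith
  -- the row finsets
  set I : ℤ → Finset ℤ := fun c =>
    Finset.Icc ⌈-x*(c:ℝ) - h1 c⌉ ⌊-x*(c:ℝ) - h2 c⌋ ∪
    Finset.Icc ⌈-x*(c:ℝ) + h2 c⌉ ⌊-x*(c:ℝ) + h1 c⌋ with hI_def
  set B : Finset (ℤ × ℤ) := (Finset.Icc (-C) C).biUnion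
    (fun c => (I c).image (fun a => (a, c))) with hB_def
  have hh21 : ∀ t : ℝ, h2 t ≤ h1 t := fun t => Real.sqrt_le_sqrt (by linarith)
  have hh1nonneg : ∀ t : ℝ, 0 ≤ h1 t := fun t => Real.sqrt_nonneg _
  have hh2nonneg : ∀ t : ℝ, 0 ≤ h2 t := fun t => Real.sqrt_nonneg _
  -- S ⊆ B
  have hSB : S ⊆ ↑B := by
    intro p hp
    obtain ⟨a, c⟩ := p
    have hQ := hmem _ hp
    simp only at hQ
    rw [abs_le] at hQ
    have hL : T - δ ≤ ((a:ℝ) + x*(c:ℝ))^2 + v^2*(c:ℝ)^2 := by linarith [hQ.1]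
    have hU : ((a:ℝ) + x*(c:ℝ))^2 + v^2*(c:ℝ)^2 ≤ T + δ := by linarith [hQ.2]
    have hc2 : v^2*(c:ℝ)^2 ≤ T + δ := by nlinarith [sq_nonneg ((a:ℝ) + x*(c:ℝ))]
    have hvc : v * |(c:ℝ)| ≤ R := by
      have e : v * |(c:ℝ)| = Real.sqrt (v^2 * (c:ℝ)^2) := by
        rw [Real.sqrt_mul (sq_nonneg v), Real.sqrt_sq hv.le, Real.sqrt_sq_eq_abs]
      rw [e, hR_def]
      exact Real.sqrt_le_sqrt hc2
    have hcabs : |(c:ℝ)| ≤ R / v := by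
      rw [le_div_iff₀ hv]
      calc |(c:ℝ)| * v = v * |(c:ℝ)| := by ring
        _ ≤ R := hvc
    rw [abs_le] at hcabs
    have hcmem : c ∈ Finset.Icc (-C) C := by
      have hc1 : (-c : ℤ) ≤ C := Int.le_floor.mpr (by push_cast; linarith [hcabs.1])
      have hc2' : c ≤ C := Int.le_floor.mpr (by push_cast; linarith [hcabs.2])
      exact Finset.mem_Icc.mpr ⟨by omega, hc2'⟩
    have habs_up : |(a:ℝ) + x*(c:ℝ)| ≤ h1 c := by
      rw [← Real.sqrt_sq_eq_abs]
      exact Real.sqrt_le_sqrt (by linarith)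
    have habs_lo : h2 c ≤ |(a:ℝ) + x*(c:ℝ)| := by
      rw [← Real.sqrt_sq_eq_abs]
      exact Real.sqrt_le_sqrt (by linarith)
    have haI : a ∈ I c := by
      rw [hI_def]
      simp only [Finset.mem_union, Finset.mem_Icc]
      rcases le_or_gt 0 ((a:ℝ) + x*(c:ℝ)) with hpos | hneg
      · right
        rw [abs_of_nonneg hpos] at habs_up habs_lo
        constructor
        · exact Int.ceil_le.mpr (by linarith)
        · exact Int.le_floor.mpr (by linarith)
      · left
        rw [abs_of_neg hneg] at habs_up habs_lo
        constructor
        · exact Int.ceil_le.mpr (by linarith)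
        · exact Int.le_floor.mpr (by linarith)
    rw [hB_def]
    simp only [Finset.coe_biUnion, Set.mem_iUnion, Finset.mem_coe]
    exact ⟨c, hcmem, Finset.mem_image.mpr ⟨a, haI, rfl⟩⟩
  have hfin : S.Finite := Set.Finite.subset B.finite_toSet hSB
  refine ⟨hfin, ?_⟩
  have hNB : (S.ncard : ℝ) ≤ (B.card : ℝ) := by
    have := Set.ncard_le_ncard hSB B.finite_toSet
    rw [Set.ncard_coe_finset] at this
    exact_mod_cast this
  -- card B ≤ sum of row bounds
  have hrow : ∀ c : ℤ, ((I c).card : ℝ) ≤ 2*(h1 c - h2 c) + 2 := by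
    intro c
    calc ((I c).card : ℝ)
        ≤ ((Finset.Icc ⌈-x*(c:ℝ) - h1 c⌉ ⌊-x*(c:ℝ) - h2 c⌋).card : ℝ)
          + ((Finset.Icc ⌈-x*(c:ℝ) + h2 c⌉ ⌊-x*(c:ℝ) + h1 c⌋).card : ℝ) := by
          rw [hI_def]
          exact_mod_cast Finset.card_union_le _ _
      _ ≤ ((-x*(c:ℝ) - h2 c) - (-x*(c:ℝ) - h1 c) + 1)
          + ((-x*(c:ℝ) + h1 c) - (-x*(c:ℝ) + h2 c) + 1) := by
          gcongr <;> [exact card_int_Icc_le _ _ (by linarith [hh21 (c:ℝ)]);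
            exact card_int_Icc_le _ _ (by linarith [hh21 (c:ℝ)])]
      _ = 2*(h1 c - h2 c) + 2 := by ring
  have hBsum : (B.card : ℝ) ≤ ∑ c ∈ Finset.Icc (-C) C, (2*(h1 c - h2 c) + 2) := by
    calc (B.card : ℝ) ≤ ((∑ c ∈ Finset.Icc (-C) C, ((I c).image (fun a => (a, c))).card : ℕ) : ℝ) := by
          exact_mod_cast Finset.card_biUnion_le
      _ = ∑ c ∈ Finset.Icc (-C) C, (((I c).image (fun a => (a, c))).card : ℝ) := by push_cast; ring
      _ ≤ ∑ c ∈ Finset.Icc (-C) C, (2*(h1 c - h2 c) + 2) := by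
          apply Finset.sum_le_sum
          intro c _
          calc ((((I c).image (fun a => (a, c))).card : ℕ) : ℝ) ≤ ((I c).card : ℝ) := by
                exact_mod_cast Finset.card_image_le
            _ ≤ 2*(h1 c - h2 c) + 2 := hrow c
  -- sum manipulation: symmetry
  set q : ℤ → ℝ := fun c => h1 (c:ℝ) - h2 (c:ℝ) with hq_def
  have hqeven : ∀ c : ℤ, q (-c) = q c := by
    intro c
    simp only [hq_def, h1_def, h2_def]
    push_cast
    ring_nf
  have hsplit : Finset.Icc (-C) C = Finset.Icc (-C) (-1) ∪ Finset.Icc 0 C := by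
    ext z
    simp only [Finset.mem_Icc, Finset.mem_union]
    omega
  have hdisj : Disjoint (Finset.Icc (-C) (-1)) (Finset.Icc (0:ℤ) C) := by
    rw [Finset.disjoint_left]
    intro z hz hz'
    simp only [Finset.mem_Icc] at hz hz'
    omega
  have hnegmap : Finset.Icc (-C) (-1) = (Finset.Icc (1:ℤ) C).image (fun c => -c) := by
    ext z
    simp only [Finset.mem_Icc, Finset.mem_image]
    constructor
    · intro hz
      exact ⟨-z, by omega, by omega⟩
    · rintro ⟨w, hw, rfl⟩
      omega
  have hsum_neg : ∑ c ∈ Finset.Icc (-C) (-1), q c = ∑ c ∈ Finset.Icc (1:ℤ) C, q c := by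
    rw [hnegmap, Finset.sum_image (by intro a _ b _ h; exact neg_inj.mp h)]
    exact Finset.sum_congr rfl (fun c _ => hqeven c)
  have h0notin : (0:ℤ) ∉ Finset.Icc (1:ℤ) C := by simp
  have h0split : Finset.Icc (0:ℤ) C = insert 0 (Finset.Icc (1:ℤ) C) := by
    ext z
    simp only [Finset.mem_Icc, Finset.mem_insert]
    omega
  have hsum_split : ∑ c ∈ Finset.Icc (-C) C, q c
      = q 0 + 2 * ∑ c ∈ Finset.Icc (1:ℤ) C, q c := by
    rw [hsplit, Finset.sum_union hdisj, hsum_neg, h0split, Finset.sum_insert h0notin]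
    push_cast
    ring
  -- reindex Icc 1 C to range n
  have hreindex : ∑ c ∈ Finset.Icc (1:ℤ) C, q c
      = ∑ i ∈ Finset.range n, q (1 + (i:ℤ)) := by
    refine Finset.sum_nbij' (i := fun c => (c - 1).toNat) (j := fun i => 1 + (i:ℤ))
      ?_ ?_ ?_ ?_ ?_
    · intro a ha
      simp only [Finset.mem_Icc] at ha
      simp only [Finset.mem_range]
      omega
    · intro a ha
      simp only [Finset.mem_range] at ha
      simp only [Finset.mem_Icc]
      omega
    · intro a ha
      simp only [Finset.mem_Icc] at ha
      omega
    · intro a ha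
      simp only [Finset.mem_range] at ha
      omega
    · intro a ha
      simp only [Finset.mem_Icc] at ha
      congr 1
      omega
  -- continuity
  have hpoly1 : Continuous (fun t : ℝ => T + δ - v^2*t^2) :=
    continuous_const.sub (continuous_const.mul (continuous_pow 2))
  have hpoly2 : Continuous (fun t : ℝ => T - δ - v^2*t^2) :=
    continuous_const.sub (continuous_const.mul (continuous_pow 2))
  have hcont1 : Continuous (fun t : ℝ => Real.sqrt (T + δ - v^2*t^2)) :=
    Real.continuous_sqrt.comp hpoly1
  have hcont2 : Continuous (fun t : ℝ => Real.sqrt (T - δ - v^2*t^2)) :=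
    Real.continuous_sqrt.comp hpoly2
  -- integral values
  have e1 : (∫ t in (0:ℝ)..((n:ℝ)+1), Real.sqrt (T + δ - v^2*t^2)) = π * (T+δ) / (4*v) := by
    have h := integral_sqrt_parab v R ((n:ℝ)+1) hv hR0.le (by linarith)
    simp only [hR2] at h
    exact h
  have e2 : (∫ t in (0:ℝ)..((n:ℝ)+1), Real.sqrt (T - δ - v^2*t^2)) = π * (T-δ) / (4*v) := by
    have hrv : r / v ≤ (n:ℝ) + 1 := by
      have : r / v ≤ R / v := by gcongr
      linarith
    have h := integral_sqrt_parab v r ((n:ℝ)+1) hv hr0.le hrv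
    simp only [hr2] at h
    exact h
  -- antitone facts
  have hant1 : AntitoneOn (fun t : ℝ => Real.sqrt (T + δ - v^2*t^2)) (Set.Icc (0:ℝ) (0 + (n:ℕ))) := by
    intro s hs t ht hst
    apply Real.sqrt_le_sqrt
    have hs0 : 0 ≤ s := hs.1
    have hsq : s^2 ≤ t^2 := by nlinarith
    have := mul_le_mul_of_nonneg_left hsq (sq_nonneg v)
    linarith
  have hant2 : AntitoneOn (fun t : ℝ => Real.sqrt (T - δ - v^2*t^2)) (Set.Icc (1:ℝ) (1 + (n:ℕ))) := by
    intro s hs t ht hst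
    apply Real.sqrt_le_sqrt
    have hs0 : (0:ℝ) ≤ s := le_trans zero_le_one hs.1
    have hsq : s^2 ≤ t^2 := by nlinarith
    have := mul_le_mul_of_nonneg_left hsq (sq_nonneg v)
    linarith
  -- sum ≤ integral for h1
  have sum1 : ∑ i ∈ Finset.range n, Real.sqrt (T + δ - v^2*((1:ℝ) + (i:ℕ))^2)
      ≤ π * (T+δ) / (4*v) := by
    have hA := hant1.sum_le_integral
    have heq : ∑ i ∈ Finset.range n, Real.sqrt (T + δ - v^2*((1:ℝ) + (i:ℕ))^2)
        = ∑ i ∈ Finset.range n, (fun t : ℝ => Real.sqrt (T + δ - v^2*t^2)) ((0:ℝ) + ((i:ℕ) + 1 : ℕ)) := by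
      apply Finset.sum_congr rfl
      intro i _
      simp only
      congr 1
      push_cast
      ring
    rw [heq]
    refine le_trans hA ?_
    -- ∫ 0..n ≤ ∫ 0..n+1 = value
    have hadj := intervalIntegral.integral_add_adjacent_intervals (μ := MeasureTheory.volume)
      (hcont1.intervalIntegrable (0:ℝ) ((n:ℝ))) (hcont1.intervalIntegrable ((n:ℝ)) ((n:ℝ)+1))
    have hpos : 0 ≤ ∫ t in ((n:ℝ))..((n:ℝ)+1), Real.sqrt (T + δ - v^2*t^2) :=
      intervalIntegral.integral_nonneg (by linarith) (fun u _ => Real.sqrt_nonneg _)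
    have : (∫ t in (0:ℝ)..(0 + (n:ℕ) : ℝ), Real.sqrt (T + δ - v^2*t^2))
        = ∫ t in (0:ℝ)..((n:ℝ)), Real.sqrt (T + δ - v^2*t^2) := by norm_num
    rw [this]
    linarith [e1]
  -- integral ≤ sum for h2
  have sum2 : π * (T-δ) / (4*v) - Real.sqrt T
      ≤ ∑ i ∈ Finset.range n, Real.sqrt (T - δ - v^2*((1:ℝ) + (i:ℕ))^2) := by
    have hA := hant2.integral_le_sum
    have heq : ∑ i ∈ Finset.range n, (fun t : ℝ => Real.sqrt (T - δ - v^2*t^2)) ((1:ℝ) + (i:ℕ))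
        = ∑ i ∈ Finset.range n, Real.sqrt (T - δ - v^2*((1:ℝ) + (i:ℕ))^2) := rfl
    rw [heq] at hA
    refine le_trans ?_ hA
    have hadj := intervalIntegral.integral_add_adjacent_intervals (μ := MeasureTheory.volume)
      (hcont2.intervalIntegrable (0:ℝ) (1:ℝ)) (hcont2.intervalIntegrable (1:ℝ) ((1:ℝ)+(n:ℕ)))
    have h01 : (∫ t in (0:ℝ)..(1:ℝ), Real.sqrt (T - δ - v^2*t^2)) ≤ Real.sqrt T := by
      calc (∫ t in (0:ℝ)..(1:ℝ), Real.sqrt (T - δ - v^2*t^2))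
          ≤ ∫ _t in (0:ℝ)..(1:ℝ), Real.sqrt T := by
            apply intervalIntegral.integral_mono_on zero_le_one
              (hcont2.intervalIntegrable _ _) (continuous_const.intervalIntegrable _ _)
            intro t _
            apply Real.sqrt_le_sqrt
            nlinarith [sq_nonneg (v*t)]
        _ = Real.sqrt T := by simp
    have he2' : (∫ t in (0:ℝ)..((1:ℝ)+(n:ℕ)), Real.sqrt (T - δ - v^2*t^2)) = π * (T-δ) / (4*v) := by
      rw [show ((1:ℝ)+(n:ℕ)) = ((n:ℝ)+1) by push_cast; ring]
      exact e2
    linarith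
  -- combine
  have hqsum : ∑ i ∈ Finset.range n, q (1 + (i:ℤ)) ≤ π * δ / (2*v) + Real.sqrt T := by
    have hq1 : ∀ i : ℕ, q (1 + (i:ℤ)) = Real.sqrt (T + δ - v^2*((1:ℝ) + (i:ℕ))^2)
        - Real.sqrt (T - δ - v^2*((1:ℝ) + (i:ℕ))^2) := by
      intro i
      simp only [hq_def, h1_def, h2_def]
      push_cast
      ring_nf
    simp_rw [hq1]
    rw [Finset.sum_sub_distrib]
    have harith : π * (T+δ) / (4*v) - (π * (T-δ) / (4*v) - Real.sqrt T)
        = π * δ / (2*v) + Real.sqrt T := by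
      field_simp
      ring
    linarith
  -- q 0 bound
  have hq0 : q 0 ≤ Real.sqrt (2*δ) := by
    have e0 : h1 ((0:ℤ):ℝ) = R := by simp [h1_def, hR_def]
    have e0' : h2 ((0:ℤ):ℝ) = r := by simp [h2_def, hr_def]
    have h2δ : (Real.sqrt (2*δ))^2 = 2*δ := Real.sq_sqrt (by linarith)
    have hRr : R ≤ r + Real.sqrt (2*δ) := by
      rw [← Real.sqrt_sq (by positivity : (0:ℝ) ≤ r + Real.sqrt (2*δ)), hR_def]
      apply Real.sqrt_le_sqrt
      nlinarith [Real.sqrt_nonneg (2*δ), hr0]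
    simp only [hq_def]
    rw [show ((0:ℤ):ℝ) = (0:ℝ) by norm_cast] at e0 e0' ⊢
    rw [e0, e0']
    linarith
  -- cardinality of Icc
  have hcard : ((Finset.Icc (-C) C).card : ℝ) = 2*(n:ℝ) + 1 := by
    rw [Int.card_Icc]
    have : (C + 1 - -C).toNat = 2*n + 1 := by omega
    rw [this]
    push_cast
    ring
  -- the total sum bound
  have htotal : ∑ c ∈ Finset.Icc (-C) C, (2*(h1 (c:ℝ) - h2 (c:ℝ)) + 2)
      ≤ 2*Real.sqrt (2*δ) + 2*π*δ/v + 4*Real.sqrt T + 4*(n:ℝ) + 2 := by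
    have hrw : ∑ c ∈ Finset.Icc (-C) C, (2*(h1 (c:ℝ) - h2 (c:ℝ)) + 2)
        = 2 * (∑ c ∈ Finset.Icc (-C) C, q c) + 2 * ((Finset.Icc (-C) C).card : ℝ) := by
      rw [Finset.sum_add_distrib, ← Finset.mul_sum, Finset.sum_const]
      simp only [hq_def]
      push_cast
      ring
    rw [hrw, hcard, hsum_split, hreindex]
    have e4 : 4*(π * δ / (2*v)) = 2*π*δ/v := by
      field_simp
      ring
    have h4 := mul_le_mul_of_nonneg_left hqsum (by norm_num : (0:ℝ) ≤ 4)
    generalize hgen : ∑ i ∈ Finset.range n, q (1 + (i:ℤ)) = Sm at h4 ⊢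
    clear_value q h1 h2 R r
    linarith [hq0, h4]
  -- final numeric comparison
  have hRv : R / v ≤ Real.sqrt (2*T) := by
    apply Real.le_sqrt_of_sq_le
    rw [div_pow, div_le_iff₀ (by positivity : (0:ℝ) < v^2)]
    nlinarith [hR2, hδT, hv2, hT]
  have hsT : Real.sqrt T ≤ Real.sqrt (2*T) := Real.sqrt_le_sqrt (by linarith)
  have hs2δ : Real.sqrt (2*δ) ≤ Real.sqrt (2*T) := Real.sqrt_le_sqrt (by linarith)
  have hnRv : (n:ℝ) ≤ Real.sqrt (2*T) := le_trans hnR hRv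
  calc (S.ncard : ℝ) ≤ (B.card : ℝ) := hNB
    _ ≤ ∑ c ∈ Finset.Icc (-C) C, (2*(h1 (c:ℝ) - h2 (c:ℝ)) + 2) := hBsum
    _ ≤ 2*Real.sqrt (2*δ) + 2*π*δ/v + 4*Real.sqrt T + 4*(n:ℝ) + 2 := htotal
    _ ≤ 2*π*δ/v + 10*Real.sqrt (2*T) + 2 := by linarith

/-- The number of integer points in the elliptical annulus
`|a² + 2ν|Re ξ|ac + |ξ|²c² − Im(ξ)/y| ≤ 50|ξ|³ √ε / y` is at most
`16π(√(2 Im ξ) + √y)/√y + 100π|ξ|³√ε/(y · Im ξ)`. -/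
theorem lattice_points_in_annulus
    (ξ : ℂ) (hξ : inFD ξ) (y : ℝ) (hy : 0 < y) (ε : ℝ) (hε : 0 < ε)
    (hε' : ε ≤ (ξ.im / (100 * (‖ξ‖) ^ 3)) ^ 2)
    (ν : ℝ) (hν : ν = 1 ∨ ν = -1)
    (S : Set (ℤ × ℤ))
    (hS : S = {p : ℤ × ℤ |
      |(p.1 : ℝ) ^ 2 + 2 * ν * |ξ.re| * ((p.1 : ℝ) * (p.2 : ℝ))
          + (‖ξ‖) ^ 2 * (p.2 : ℝ) ^ 2 - ξ.im / y|
        ≤ 50 * (‖ξ‖) ^ 3 * Real.sqrt ε / y}) :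
    S.Finite ∧
    (S.ncard : ℝ) ≤ 16 * π * (Real.sqrt (2 * ξ.im) + Real.sqrt y) / Real.sqrt y
        + 100 * π * (‖ξ‖) ^ 3 * Real.sqrt ε / (y * ξ.im) := by
  obtain ⟨him, hre, habs⟩ := hξ
  have hA0 : (0:ℝ) < ‖ξ‖ := lt_of_lt_of_le one_pos habs
  have habs2 : (‖ξ‖)^2 = ξ.re^2 + ξ.im^2 := by
    rw [Complex.sq_norm, Complex.normSq_apply]
    ring
  have hν2 : ν^2 = 1 := by rcases hν with rfl | rfl <;> norm_num
  have hx2 : (ν * |ξ.re|)^2 = ξ.re^2 := by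
    rw [mul_pow, hν2, one_mul, sq_abs]
  have hv2 : 3/4 ≤ ξ.im^2 := by
    have h1 : ξ.re^2 ≤ 1/4 := by
      have := abs_nonneg ξ.re
      nlinarith [sq_abs ξ.re]
    nlinarith [habs2, habs]
  have hT : 0 < ξ.im / y := div_pos him hy
  have hsε : 0 < Real.sqrt ε := Real.sqrt_pos.mpr hε
  have hδ : 0 < 50 * (‖ξ‖)^3 * Real.sqrt ε / y := by positivity
  have hδT : 50 * (‖ξ‖)^3 * Real.sqrt ε / y ≤ (ξ.im / y) / 2 := by
    have hsle : Real.sqrt ε ≤ ξ.im / (100 * (‖ξ‖)^3) := by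
      have h := Real.sqrt_le_sqrt hε'
      rwa [Real.sqrt_sq (by positivity)] at h
    have h1 : 50 * (‖ξ‖)^3 * Real.sqrt ε
        ≤ 50 * (‖ξ‖)^3 * (ξ.im / (100 * (‖ξ‖)^3)) := by
      exact mul_le_mul_of_nonneg_left hsle (by positivity)
    have h2 : 50 * (‖ξ‖)^3 * (ξ.im / (100 * (‖ξ‖)^3)) = ξ.im / 2 := by
      field_simp
      ring
    rw [div_le_div_iff₀ hy (by positivity : (0:ℝ) < 2)] at *
    calc 50 * (‖ξ‖)^3 * Real.sqrt ε * 2 ≤ (ξ.im/2) * 2 := by nlinarith [h1, h2]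
      _ = ξ.im := by ring
      _ = (ξ.im / y) * y := by field_simp
  have hmem : ∀ p ∈ S, |((p.1:ℝ) + (ν * |ξ.re|)*(p.2:ℝ))^2 + ξ.im^2*(p.2:ℝ)^2 - ξ.im/y|
      ≤ 50 * (‖ξ‖)^3 * Real.sqrt ε / y := by
    intro p hp
    rw [hS] at hp
    simp only [Set.mem_setOf_eq] at hp
    have e : ((p.1:ℝ) + (ν * |ξ.re|)*(p.2:ℝ))^2 + ξ.im^2*(p.2:ℝ)^2 - ξ.im/y
        = (p.1 : ℝ) ^ 2 + 2 * ν * |ξ.re| * ((p.1 : ℝ) * (p.2 : ℝ))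
          + (‖ξ‖) ^ 2 * (p.2 : ℝ) ^ 2 - ξ.im / y := by
      rw [habs2]
      linear_combination ((p.2:ℝ))^2 * hx2
    rw [e]
    exact hp
  obtain ⟨hfin, hcount⟩ := annulus_count (ν * |ξ.re|) ξ.im (ξ.im/y)
    (50 * (‖ξ‖)^3 * Real.sqrt ε / y) him hv2 hT hδ hδT S hmem
  refine ⟨hfin, le_trans hcount ?_⟩
  have e1 : 2*π*(50 * (‖ξ‖)^3 * Real.sqrt ε / y)/ξ.im
      = 100 * π * (‖ξ‖) ^ 3 * Real.sqrt ε / (y * ξ.im) := by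
    field_simp
    ring
  have hsy : (0:ℝ) < Real.sqrt y := Real.sqrt_pos.mpr hy
  have e2 : 16 * π * (Real.sqrt (2 * ξ.im) + Real.sqrt y) / Real.sqrt y
      = 16*π*Real.sqrt (2*(ξ.im/y)) + 16*π := by
    have e3 : Real.sqrt (2*(ξ.im/y)) = Real.sqrt (2*ξ.im) / Real.sqrt y := by
      rw [show 2*(ξ.im/y) = (2*ξ.im)/y by ring]
      exact Real.sqrt_div (by linarith) y
    rw [e3]
    field_simp
  rw [e2, e1]
  have hnum : 10*Real.sqrt (2*(ξ.im/y)) + 2 ≤ 16*π*Real.sqrt (2*(ξ.im/y)) + 16*π := by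
    nlinarith [Real.pi_gt_three, Real.sqrt_nonneg (2*(ξ.im/y))]
  linarith
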